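/- Let n ≥ 1 and let q, p ∈ ℝⁿ with q ≠ 0 and K(q,p) := ‖p‖²/2 - 1/‖q‖ < 0. Define u = (√(-2K(q,p))·‖q‖·p, ‖p‖²‖q‖ - 1) ∈ ℝⁿ × ℝ = ℝⁿ⁺¹ and v = (-q/‖q‖ + ⟨q,p⟩·p, -√(-2K(q,p))·⟨q,p⟩) ∈ ℝⁿ⁺¹. Then ‖u‖ = 1, ‖v‖ = 1, and ⟨u, v⟩ = 0, i.e., u and v are orthonormal vectors in ℝⁿ⁺¹. -/

import Mathlib

open RealInnerProductSpace

/-- The Ligon-Schaaf vectors `u` and `v` are orthonormal in `ℝⁿ⁺¹`. -/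
theorem ligonSchaaf_uv_orthonormal (n : ℕ) (hn : 1 ≤ n)
    (q p : EuclideanSpace ℝ (Fin n)) (hq : q ≠ 0)
    (hK : ‖p‖ ^ 2 / 2 - 1 / ‖q‖ < 0) :
    let K : ℝ := ‖p‖ ^ 2 / 2 - 1 / ‖q‖
    let u : WithLp 2 (EuclideanSpace ℝ (Fin n) × ℝ) :=
      (WithLp.equiv 2 (EuclideanSpace ℝ (Fin n) × ℝ)).symm
        ((Real.sqrt (-2 * K) * ‖q‖) • p, ‖p‖ ^ 2 * ‖q‖ - 1)
    let v : WithLp 2 (EuclideanSpace ℝ (Fin n) × ℝ) :=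
      (WithLp.equiv 2 (EuclideanSpace ℝ (Fin n) × ℝ)).symm
        (-(‖q‖⁻¹ • q) + ⟪q, p⟫ • p, -(Real.sqrt (-2 * K) * ⟪q, p⟫))
    ‖u‖ = 1 ∧ ‖v‖ = 1 ∧ ⟪u, v⟫ = 0 := by
  intro K u v
  have hr : (0:ℝ) < ‖q‖ := norm_pos_iff.mpr hq
  set r := ‖q‖ with hrdef
  set s := ‖p‖ with hsdef
  set c := ⟪q, p⟫ with hcdef
  have hKnn : (0:ℝ) ≤ -2 * K := by
    have : K < 0 := hK
    linarith
  have hsq : Real.sqrt (-2 * K) ^ 2 = 2 / r - s ^ 2 := by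
    rw [Real.sq_sqrt hKnn]
    simp only [K]
    ring
  have hqq : ⟪q, q⟫ = r ^ 2 := real_inner_self_eq_norm_sq q
  have hpp : ⟪p, p⟫ = s ^ 2 := real_inner_self_eq_norm_sq p
  have hqp : ⟪p, q⟫ = c := real_inner_comm q p
  -- first components
  have hufst : u.fst = (Real.sqrt (-2 * K) * r) • p := rfl
  have husnd : u.snd = s ^ 2 * r - 1 := rfl
  have hvfst : v.fst = -(r⁻¹ • q) + c • p := rfl
  have hvsnd : v.snd = -(Real.sqrt (-2 * K) * c) := rfl
  have hnu : ‖u‖ = 1 := by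
    have h2 : ‖u‖ ^ 2 = 1 := by
      rw [WithLp.prod_norm_sq_eq_of_L2, hufst, husnd, norm_smul]
      have : ‖Real.sqrt (-2 * K) * r‖ = Real.sqrt (-2 * K) * r := by
        rw [Real.norm_eq_abs, abs_of_nonneg]
        positivity
      rw [this, Real.norm_eq_abs, sq_abs, mul_pow, mul_pow, hsq]
      field_simp
      ring
    nlinarith [norm_nonneg u]
  have hvnorm2 : ‖v.fst‖ ^ 2 = 1 - 2 * c ^ 2 / r + c ^ 2 * s ^ 2 := by
    rw [hvfst, ← real_inner_self_eq_norm_sq]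
    simp only [inner_add_add_self, real_inner_smul_left, real_inner_smul_right,
      inner_neg_neg, inner_neg_left, inner_neg_right, hqq, hpp, real_inner_comm q p, ← hcdef]
    field_simp
    ring
  have hnv : ‖v‖ = 1 := by
    have h2 : ‖v‖ ^ 2 = 1 := by
      rw [WithLp.prod_norm_sq_eq_of_L2, hvnorm2, hvsnd, Real.norm_eq_abs, sq_abs,
        neg_pow, mul_pow, hsq]
      have : (2 / r - s ^ 2) * c ^ 2 = 2 * c ^ 2 / r - s ^ 2 * c ^ 2 := by ring
      field_simp
      ring
    nlinarith [norm_nonneg v]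
  have hinner : ⟪u, v⟫ = 0 := by
    rw [WithLp.prod_inner_apply]
    change ⟪(Real.sqrt (-2 * K) * r) • p, -(r⁻¹ • q) + c • p⟫ +
      ⟪s ^ 2 * r - 1, -(Real.sqrt (-2 * K) * c)⟫ = 0
    rw [real_inner_smul_left, inner_add_right, inner_neg_right,
      real_inner_smul_right, real_inner_smul_right, hqp, hpp]
    simp only [RCLike.inner_apply, conj_trivial]
    field_simp
    ring
  exact ⟨hnu, hnv, hinner⟩
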